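/- There exists a mean-payoff game Γ and a bound b ∈ ℕ such that Min has no positional strategy that is optimal with respect to the lower-weak-upper-bound problem, although Min has an optimal strategy with memory. Concretely: consider the game with vertices v₁, v₂, v₃, v₄ where v₃ belongs to Min and v₁, v₂, v₄ belong to Max, edges and weights such as in the example with b = 15 where from v₃ Min can move to v₁ or v₄, and neither of the two positional strategies of Min forces Max to lose from v₃ (i.e., under each positional Min strategy Max has finite minimal sufficient energy at v₃), yet a Min strategy that first moves from v₃ to v₄ and, upon return to v₃, moves to v₁ forces a path segment of weight −20 < −b, making lwub_b(v₃) = ∞. -/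

import Mathlib

/-- Max has a (history-dependent) strategy ensuring that every infinite play
from `v` consistent with it keeps `x` plus all prefix sums non-negative and
contains no segment of weight below `-b` (lower-weak-upper-bound problem).
Quantifying over all plays consistent with Max's strategy captures `∀` over
Min's strategies. -/
def EnsLWUB {V : Type*} (E : V → V → Prop) (w : V → V → ℤ)
    (VMax : Set V) (b : ℕ) (v : V) (x : ℕ) : Prop :=
  ∃ σ : List V → V,
    (∀ (l : List V) (u : V), l.getLast? = some u → u ∈ VMax → E u (σ l)) ∧
    ∀ p : ℕ → V, p 0 = v → (∀ i, E (p i) (p (i + 1))) →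
      (∀ i, p i ∈ VMax →
        p (i + 1) = σ (List.ofFn (fun j : Fin (i + 1) => p j))) →
      ((∀ n : ℕ, 0 ≤ (x : ℤ) + ∑ i ∈ Finset.range n, w (p i) (p (i + 1))) ∧
        ∀ n₁ n₂ : ℕ, n₁ < n₂ →
          -(b : ℤ) ≤ ∑ i ∈ Finset.Ico n₁ n₂, w (p i) (p (i + 1)))

lemma getLast?_ofFn_succ {α : Type*} (n : ℕ) (f : Fin (n+1) → α) :
    (List.ofFn f).getLast? = some (f ⟨n, n.lt_succ_self⟩) := by
  rw [List.getLast?_eq_getElem?, List.length_ofFn, List.getElem?_ofFn]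
  simp [List.ofFnNthVal]

lemma alt_sum (a : ℤ) (g : ℕ → ℤ) (hg : ∀ i, g i = if i % 2 = 0 then a else -a) :
    ∀ n, ∑ i ∈ Finset.range n, g i = if n % 2 = 0 then 0 else a := by
  intro n
  induction n with
  | zero => simp
  | succ n ih =>
    rw [Finset.sum_range_succ, ih, hg]
    rcases Nat.even_or_odd n with h | h <;>
      simp [Nat.even_iff, Nat.odd_iff] at h <;>
      simp [h, Nat.add_mod]


/-- there is a mean-payoff game (on four vertices) and a bound
`b` with a Min vertex `v` such that `lwub_b(v) = ∞` (no finite initial energy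
suffices for Max), yet for every positional strategy `π` of Min, Max has a
finite sufficient initial energy at `v` against `π`; hence no positional
strategy of Min is optimal for the lower-weak-upper-bound problem, although
Min (with memory) can force Max to lose from `v`. -/
theorem stmt_18 :
    ∃ (E : Fin 4 → Fin 4 → Prop) (w : Fin 4 → Fin 4 → ℤ)
      (VMax : Set (Fin 4)) (b : ℕ) (v : Fin 4),
      (∀ u : Fin 4, ∃ u', E u u') ∧ v ∉ VMax ∧
      (∀ x : ℕ, ¬ EnsLWUB E w VMax b v x) ∧
      (∀ π : Fin 4 → Fin 4, (∀ u ∉ VMax, E u (π u)) →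
        ∃ (x : ℕ) (p : ℕ → Fin 4), p 0 = v ∧
          (∀ i, E (p i) (p (i + 1)) ∧ (p i ∉ VMax → p (i + 1) = π (p i))) ∧
          (∀ n : ℕ, 0 ≤ (x : ℤ) + ∑ i ∈ Finset.range n, w (p i) (p (i + 1))) ∧
          (∀ n₁ n₂ : ℕ, n₁ < n₂ →
            -(b : ℤ) ≤ ∑ i ∈ Finset.Ico n₁ n₂, w (p i) (p (i + 1)))) := by
  set E : Fin 4 → Fin 4 → Prop := fun u u' =>
    (u = 0 ∧ (u' = 1 ∨ u' = 2)) ∨ (u = 1 ∧ u' = 0) ∨ (u = 2 ∧ u' = 0) ∨ (u = 3 ∧ u' = 3)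
    with hE
  set w : Fin 4 → Fin 4 → ℤ := fun u u' =>
    if u = 0 ∧ u' = 1 then -10 else if u = 0 ∧ u' = 2 then 10
    else if u = 1 then 10 else if u = 2 then -10 else 0 with hw
  refine ⟨E, w, {u | u ≠ 0}, 15, 0, ?_, by simp, ?_, ?_⟩
  · decide
  · -- no finite energy suffices for Max
    rintro x ⟨σ, hσ, hplay⟩
    set p : ℕ → Fin 4 := fun n =>
      if n = 0 then 0 else if n = 1 then 2 else if n % 2 = 0 then 0 else 1 with hp
    have hedge : ∀ i, E (p i) (p (i + 1)) := by
      intro i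
      match i with
      | 0 => decide
      | 1 => decide
      | (n+2) =>
        rcases Nat.even_or_odd n with h | h <;>
          simp [Nat.even_iff, Nat.odd_iff] at h <;>
          simp [hp, hE, Nat.add_mod, h]
    have hcons : ∀ i, p i ∈ ({u | u ≠ 0} : Set (Fin 4)) →
        p (i + 1) = σ (List.ofFn (fun j : Fin (i + 1) => p j)) := by
      intro i hi
      have hlast := getLast?_ofFn_succ i (fun j : Fin (i+1) => p j)
      have hfin : (⟨i, i.lt_succ_self⟩ : Fin (i+1)) = (Fin.last i) ∨ True := Or.inr trivial
      have hEσ : E (p i) (σ (List.ofFn (fun j : Fin (i + 1) => p j))) :=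
        hσ _ _ hlast hi
      -- p i is 1 or 2 (never 3), so σ must go to 0; and p (i+1) = 0
      match i with
      | 0 => exact absurd rfl hi
      | 1 =>
        have h2 : p 1 = 2 := rfl
        rw [h2] at hEσ
        have : σ (List.ofFn (fun j : Fin 2 => p j)) = 0 := by
          rcases hEσ with ⟨h, _⟩ | ⟨h, _⟩ | ⟨_, h⟩ | ⟨h, _⟩ <;> first | exact h | exact absurd h (by decide)
        rw [this]; rfl
      | (n+2) =>
        rcases Nat.even_or_odd n with h | h <;> simp [Nat.even_iff, Nat.odd_iff] at h
        · exfalso; apply hi; simp [hp, Nat.add_mod, h]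
        · have h1 : p (n+2) = 1 := by simp [hp, Nat.add_mod, h]
          rw [h1] at hEσ
          have h0 : σ (List.ofFn (fun j : Fin (n+3) => p j)) = 0 := by
            rcases hEσ with ⟨h, _⟩ | ⟨_, h⟩ | ⟨h, _⟩ | ⟨h, _⟩ <;> first | exact h | exact absurd h (by decide)
          rw [h0]
          simp [hp, Nat.add_mod, h]
    have := (hplay p rfl hedge hcons).2 1 3 (by norm_num)
    have hico : Finset.Ico 1 3 = ({1, 2} : Finset ℕ) := rfl
    rw [hico, Finset.sum_insert (by decide), Finset.sum_singleton] at this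
    have e1 : w (p 1) (p 2) = -10 := by decide
    have e2 : w (p 2) (p 3) = -10 := by decide
    rw [e1, e2] at this
    norm_num at this
  · -- against any positional Min strategy, Max survives
    intro π hπ
    have hE0 : E 0 (π 0) := hπ 0 (by simp)
    have hπ0 : π 0 = 1 ∨ π 0 = 2 := by
      rcases hE0 with ⟨_, h⟩ | ⟨h, _⟩ | ⟨h, _⟩ | ⟨h, _⟩ <;>
        first | exact h | exact absurd h (by decide)
    rcases hπ0 with hπ0 | hπ0
    · -- π 0 = 1 : play 0,1,0,1,... weights -10,+10,...
      refine ⟨10, fun n => if n % 2 = 0 then 0 else 1, rfl, ?_, ?_, ?_⟩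
      · intro i
        rcases Nat.even_or_odd i with h | h <;>
          simp [Nat.even_iff, Nat.odd_iff] at h <;>
          simp [hE, Nat.add_mod, h, hπ0]
      · intro n
        have hs := alt_sum (-10)
          (fun i => w (if i % 2 = 0 then (0 : Fin 4) else 1) (if (i+1) % 2 = 0 then (0 : Fin 4) else 1))
          (by intro i
              rcases Nat.even_or_odd i with h | h <;>
                simp [Nat.even_iff, Nat.odd_iff] at h <;>
                simp [hw, Nat.add_mod, h]) n
        rw [hs]
        split <;> norm_num
      · intro n₁ n₂ hlt
        have hs := alt_sum (-10)
          (fun i => w (if i % 2 = 0 then (0 : Fin 4) else 1) (if (i+1) % 2 = 0 then (0 : Fin 4) else 1))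
          (by intro i
              rcases Nat.even_or_odd i with h | h <;>
                simp [Nat.even_iff, Nat.odd_iff] at h <;>
                simp [hw, Nat.add_mod, h])
        rw [Finset.sum_Ico_eq_sub _ hlt.le, hs, hs]
        split <;> split <;> norm_num
    · -- π 0 = 2 : play 0,2,0,2,... weights +10,-10,...
      refine ⟨0, fun n => if n % 2 = 0 then 0 else 2, rfl, ?_, ?_, ?_⟩
      · intro i
        rcases Nat.even_or_odd i with h | h <;>
          simp [Nat.even_iff, Nat.odd_iff] at h <;>
          simp [hE, Nat.add_mod, h, hπ0]
      · intro n
        have hs := alt_sum 10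
          (fun i => w (if i % 2 = 0 then (0 : Fin 4) else 2) (if (i+1) % 2 = 0 then (0 : Fin 4) else 2))
          (by intro i
              rcases Nat.even_or_odd i with h | h <;>
                simp [Nat.even_iff, Nat.odd_iff] at h <;>
                simp [hw, Nat.add_mod, h]) n
        rw [hs]
        split <;> norm_num
      · intro n₁ n₂ hlt
        have hs := alt_sum 10
          (fun i => w (if i % 2 = 0 then (0 : Fin 4) else 2) (if (i+1) % 2 = 0 then (0 : Fin 4) else 2))
          (by intro i
              rcases Nat.even_or_odd i with h | h <;>
                simp [Nat.even_iff, Nat.odd_iff] at h <;>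
                simp [hw, Nat.add_mod, h])
        rw [Finset.sum_Ico_eq_sub _ hlt.le, hs, hs]
        split <;> split <;> norm_num
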